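/- Let L be a Lie algebra over a commutative ring K, a, b, c ∈ L, and f, g polynomials over K with product h = f·g. Then there exists s ∈ L such that ⁅f((ad a)²)(b), g((ad a)²)(c)⁆ = ⁅h((ad a)²)(b), c⁆ + ⁅s, a⁆. -/
import Mathlib

section aux
variable {K L : Type*} [CommRing K] [LieRing L] [LieAlgebra K L]

/-- Right bracket by `a` as a linear map. -/
def rbr (K : Type*) {L : Type*} [CommRing K] [LieRing L] [LieAlgebra K L] (a : L) :
    L →ₗ[K] L where
  toFun w := ⁅w, a⁆
  map_add' x y := add_lie x y a
  map_smul' t x := smul_lie t x a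

lemma rbr_apply (a w : L) : rbr K a w = ⁅w, a⁆ := rfl

lemma rbr_deriv (a x y : L) : rbr K a ⁅x, y⁆ = ⁅rbr K a x, y⁆ + ⁅x, rbr K a y⁆ := by
  simp only [rbr_apply]
  rw [lie_lie, ← lie_skew ⁅x, a⁆ y]
  abel

lemma key (a u y : L) :
    ⁅u, ((rbr K a) ^ 2) y⁆ - ⁅((rbr K a) ^ 2) u, y⁆ ∈ LinearMap.range (rbr K a) := by
  refine ⟨⁅u, rbr K a y⁆ - ⁅rbr K a u, y⁆, ?_⟩
  rw [map_sub, rbr_deriv, rbr_deriv]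
  simp only [pow_two, Module.End.mul_apply]
  abel

lemma lem (a : L) (p : Polynomial K) (x y : L) :
    ⁅x, (Polynomial.aeval ((rbr K a) ^ 2)) p y⁆ - ⁅(Polynomial.aeval ((rbr K a) ^ 2)) p x, y⁆ ∈
      LinearMap.range (rbr K a) := by
  induction p using Polynomial.induction_on generalizing x y with
  | C α =>
      simp only [Polynomial.aeval_C, Module.algebraMap_end_apply, lie_smul, smul_lie, sub_self]
      exact Submodule.zero_mem _
  | add p q hp hq =>
      have := Submodule.add_mem _ (hp x y) (hq x y)
      convert this using 1
      simp only [map_add, LinearMap.add_apply, lie_add, add_lie]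
      abel
  | monomial n α hn =>
      have e1 : ∀ (m : ℕ) (z : L),
          (Polynomial.aeval ((rbr K a) ^ 2)) (Polynomial.C α * Polynomial.X ^ m) z =
            α • (((rbr K a) ^ 2) ^ m) z := by
        intro m z
        simp [Algebra.smul_def]
      have h1 := hn x (((rbr K a) ^ 2) y)
      have h2 := key (K := K) a (α • (((rbr K a) ^ 2) ^ n) x) y
      have hsum := Submodule.add_mem _ h1 h2
      have e3 : (((rbr K a) ^ 2) ^ (n + 1)) x = ((rbr K a) ^ 2) ((((rbr K a) ^ 2) ^ n) x) := by
        rw [← Module.End.mul_apply, ← pow_succ']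
      have e4 : (((rbr K a) ^ 2) ^ (n + 1)) y = (((rbr K a) ^ 2) ^ n) (((rbr K a) ^ 2) y) := by
        rw [← Module.End.mul_apply, ← pow_succ]
      convert hsum using 1
      simp only [e1, LinearMap.map_smul]
      rw [e3, e4]
      abel

end aux

theorem poly_multiplication_encoding {K L : Type*} [CommRing K] [LieRing L] [LieAlgebra K L]
    (a b c : L) (f g h : Polynomial K) (hfg : h = f * g) :
    ∃ s : L,
      ⁅f.sum fun i α => α • (fun w : L => ⁅w, a⁆)^[2 * i] b,
        g.sum fun i α => α • (fun w : L => ⁅w, a⁆)^[2 * i] c⁆ =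
      ⁅h.sum fun i α => α • (fun w : L => ⁅w, a⁆)^[2 * i] b, c⁆ + ⁅s, a⁆ := by
  have conv : ∀ (p : Polynomial K) (x : L),
      (p.sum fun i α => α • (fun w : L => ⁅w, a⁆)^[2 * i] x) =
        (Polynomial.aeval ((rbr K a) ^ 2)) p x := by
    intro p x
    rw [Polynomial.aeval_endomorphism]
    simp only [← pow_mul, Module.End.pow_apply]
    rfl
  obtain ⟨s, hs⟩ := lem a g ((Polynomial.aeval ((rbr K a) ^ 2)) f b) c
  refine ⟨s, ?_⟩
  rw [conv, conv, conv, hfg, mul_comm f g, map_mul, Module.End.mul_apply]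
  rw [show ⁅s, a⁆ = rbr K a s from rfl, hs]
  abel
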